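/- Let F be a finite field of odd cardinality q containing an element i with i² = −1, and let H be the subgroup of PSL₂(F) consisting of the classes of all upper triangular matrices [[u, x],[0, u⁻¹]] with u, x ∈ F and u⁴ = 1. For v ∈ F let ḡ_v ∈ PSL₂(F) denote the class of the matrix [[0, −1],[1, −v]] ∈ SL₂(F). If v, z ∈ F satisfy ḡ_v⁻¹ H ḡ_v = ḡ_z⁻¹ H ḡ_z (as subgroups of PSL₂(F)), then v = z. -/

import Mathlib

open Matrix MatrixGroups

/-- The natural projection `SL₂(R) → PSL₂(R)`, sending a matrix to its class modulo
the center. -/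
def pslmk {R : Type*} [CommRing R] :
    Matrix.SpecialLinearGroup (Fin 2) R →* Matrix.ProjectiveSpecialLinearGroup (Fin 2) R :=
  QuotientGroup.mk' (Subgroup.center (Matrix.SpecialLinearGroup (Fin 2) R))

/-- Let `F` be a finite field of odd cardinality `q` containing `i` with `i² = -1`, and
let `H ≤ PSL₂(F)` consist of the classes of the matrices `[[u, x], [0, u⁻¹]]` with
`u⁴ = 1`. For `v : F` let `ḡ_v` be the class of `[[0, -1], [1, -v]]`. If
`ḡ_v⁻¹ H ḡ_v = ḡ_z⁻¹ H ḡ_z` then `v = z`. -/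
theorem conj_stab_inj (F : Type*) [Field F] [Fintype F]
    (q : ℕ) (hq : Fintype.card F = q) (hodd : Odd q)
    (i : F) (hi : i ^ 2 = -1)
    (H : Subgroup (Matrix.ProjectiveSpecialLinearGroup (Fin 2) F))
    (hH : (H : Set (Matrix.ProjectiveSpecialLinearGroup (Fin 2) F)) =
      {g | ∃ u x : F, u ^ 4 = 1 ∧ ∃ h : Matrix.det !![u, x; 0, u⁻¹] = 1,
        g = pslmk ⟨!![u, x; 0, u⁻¹], h⟩})
    (v z : F) (gv gz : Matrix.SpecialLinearGroup (Fin 2) F)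
    (hgv : (gv : Matrix (Fin 2) (Fin 2) F) = !![0, -1; 1, -v])
    (hgz : (gz : Matrix (Fin 2) (Fin 2) F) = !![0, -1; 1, -z])
    (heq : Subgroup.map (MulAut.conj ((pslmk gv)⁻¹)).toMonoidHom H =
           Subgroup.map (MulAut.conj ((pslmk gz)⁻¹)).toMonoidHom H) :
    v = z := by
  -- characteristic is odd
  have h2 : (2:F) ≠ 0 := by
    intro h
    have hd : ringChar F ∣ 2 := (ringChar.spec F 2).mp (by exact_mod_cast h)
    rcases (Nat.dvd_prime Nat.prime_two).mp hd with h1 | h1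
    · have h10 : ((1:ℕ):F) = 0 := (ringChar.spec F 1).mpr (h1 ▸ dvd_refl _)
      rw [Nat.cast_one] at h10
      exact one_ne_zero h10
    · have heven := FiniteField.even_card_iff_char_two.mp h1
      rw [hq] at heven
      rcases hodd with ⟨k, hk⟩
      omega
  have hi0 : i ≠ 0 := by
    intro h
    rw [h] at hi
    simp at hi
  have hinv : i⁻¹ = -i := inv_eq_of_mul_eq_one_right (by linear_combination -hi)
  have hi4 : i ^ 4 = 1 := by
    have : i ^ 4 = (i ^ 2) ^ 2 := by ring
    rw [this, hi]; ring
  have detD : Matrix.det !![i, 0; 0, i⁻¹] = 1 := by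
    simp [Matrix.det_fin_two_of, mul_inv_cancel₀ hi0]
  set D : SL(2, F) := ⟨!![i, 0; 0, i⁻¹], detD⟩ with hD
  have h0mem : pslmk D ∈ H := by
    have : pslmk D ∈ (H : Set (Matrix.ProjectiveSpecialLinearGroup (Fin 2) F)) := by
      rw [hH]; exact ⟨i, 0, hi4, detD, rfl⟩
    exact this
  -- the conjugating element
  set w : SL(2, F) := gz * gv⁻¹ with hwdef
  set s : F := z - v with hsdef
  have hginv : ((gv⁻¹ : SL(2, F)) : Matrix (Fin 2) (Fin 2) F) = !![-v, 1; -1, 0] := by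
    rw [Matrix.SpecialLinearGroup.coe_inv, hgv, Matrix.adjugate_fin_two]
    norm_num
  have hw : (w : Matrix (Fin 2) (Fin 2) F) = !![1, 0; s, 1] := by
    rw [hwdef, Matrix.SpecialLinearGroup.coe_mul, hgz, hginv]
    ext i' j'
    fin_cases i' <;> fin_cases j' <;>
      simp [Matrix.mul_apply, Fin.sum_univ_succ, hsdef] <;> ring
  have hwinv : ((w⁻¹ : SL(2, F)) : Matrix (Fin 2) (Fin 2) F) = !![1, 0; -s, 1] := by
    rw [Matrix.SpecialLinearGroup.coe_inv, hw, Matrix.adjugate_fin_two]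
    norm_num
  -- the conjugated element lies in H
  have hmem1 : (MulAut.conj ((pslmk gv)⁻¹)).toMonoidHom (pslmk D) ∈
      Subgroup.map (MulAut.conj ((pslmk gv))⁻¹).toMonoidHom H :=
    Subgroup.mem_map_of_mem _ h0mem
  rw [heq] at hmem1
  obtain ⟨y, hyH, hy⟩ := hmem1
  have hyA : y = pslmk (w * D * w⁻¹) := by
    simp only [MulEquiv.coe_toMonoidHom, MulAut.conj_apply, inv_inv] at hy
    have : y = pslmk gz * ((pslmk gv)⁻¹ * pslmk D * pslmk gv) * (pslmk gz)⁻¹ := by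
      rw [← hy]; group
    rw [this, hwdef]
    simp only [_root_.map_mul, map_inv]
    group
  rw [hyA] at hyH
  -- extract the matrix identity
  have hyH' : pslmk (w * D * w⁻¹) ∈ (H : Set (Matrix.ProjectiveSpecialLinearGroup (Fin 2) F)) :=
    hyH
  rw [hH] at hyH'
  obtain ⟨u, x, hu4, hdet, hM⟩ := hyH'
  -- pslmk equality gives central factor
  rw [pslmk] at hM
  replace hM := (QuotientGroup.mk'_eq_mk' _).mp hM
  obtain ⟨c, hcC, hc⟩ := hM
  obtain ⟨r, hr2, hscal⟩ := Matrix.SpecialLinearGroup.mem_center_iff.mp hcC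
  have hr0 : r ≠ 0 := by
    intro h; rw [h] at hr2; simp at hr2
  -- compare the (1,0) entries
  have hcoe := congrArg (fun m : SL(2, F) => (m : Matrix (Fin 2) (Fin 2) F) 1 0) hc
  simp only [Matrix.SpecialLinearGroup.coe_mul] at hcoe
  have hcval : ((c : SL(2, F)) : Matrix (Fin 2) (Fin 2) F) = Matrix.scalar (Fin 2) r :=
    hscal.symm
  rw [hcval] at hcoe
  have hzero : 2 * s * i * r = 0 := by
    have h10 : (!![u, x; 0, u⁻¹] : Matrix (Fin 2) (Fin 2) F) 1 0 = 0 := by simp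
    rw [h10, hw, hwinv] at hcoe
    rw [← hcoe]
    simp [hD, hinv, Matrix.scalar, Matrix.mul_apply, Fin.sum_univ_succ, Matrix.diagonal, Matrix.vecMul, dotProduct]
    left; ring
  have hs : s = 0 := by
    rcases mul_eq_zero.mp hzero with h | h
    · rcases mul_eq_zero.mp h with h' | h'
      · rcases mul_eq_zero.mp h' with h'' | h''
        · exact absurd h'' h2
        · exact h''
      · exact absurd h' hi0
    · exact absurd h hr0
  have : z - v = 0 := hsdef ▸ hs
  exact (sub_eq_zero.mp this).symm
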